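/- For every integer i ≥ 1, the i-th power ω^i of the trace dual ω of the standard hereditary order Δ (the power taken as R-submodules inside the R-algebra of e×e matrices over K) equals y^{−i(e−1)}·Δ = {y^{−i(e−1)}·M : M ∈ Δ}, and equals the set of e×e matrices M over K such that for all indices j, k (with 0 ≤ j, k ≤ e−1) the entry M j k lies in the R-submodule of K spanned by t^m with m = −⌊(k − j + i(e−1))/e⌋ (floor of the rational number, with j, k, i, e regarded as integers). -/

import Mathlib

/-- The standard hereditary order of ramification index `e` over a DVR `R` with
uniformizer `t`, inside the `e × e` matrices over the fraction field `K`. -/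
def stdHereditaryOrder (R K : Type*) [CommRing R] [Field K] [Algebra R K]
    (t : R) (e : ℕ) : Set (Matrix (Fin e) (Fin e) K) :=
  {M | ∀ i j : Fin e,
    if (j : ℕ) < (i : ℕ) then ∃ r : R, algebraMap R K (t * r) = M i j
    else ∃ r : R, algebraMap R K r = M i j}

/-- The matrix `y`: `y i j = 1` if `j = i + 1`, `y i j = t` if `(i,j) = (e-1, 0)`,
and `0` otherwise. -/
def yMat (R K : Type*) [CommRing R] [Field K] [Algebra R K] (t : R) (e : ℕ) :
    Matrix (Fin e) (Fin e) K :=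
  Matrix.of fun i j =>
    if (j : ℕ) = (i : ℕ) + 1 then 1
    else if (i : ℕ) = e - 1 ∧ (j : ℕ) = 0 then algebraMap R K t
    else 0

/-- The trace dual `ω` of `Δ`, as an `R`-submodule of the matrix algebra:
matrices `M` with `trace (M * N)` in the image of `R` in `K` for all `N ∈ Δ`. -/
def traceDualSubmodule (R K : Type*) [CommRing R] [Field K] [Algebra R K]
    (t : R) (e : ℕ) : Submodule R (Matrix (Fin e) (Fin e) K) where
  carrier := {M | ∀ N ∈ stdHereditaryOrder R K t e,
    Matrix.trace (M * N) ∈ (1 : Submodule R K)}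
  add_mem' := by
    intro a b ha hb N hN
    rw [Matrix.add_mul, Matrix.trace_add]
    exact add_mem (ha N hN) (hb N hN)
  zero_mem' := by intro N hN; simp
  smul_mem' := by
    intro r M hM N hN
    rw [Matrix.smul_mul, Matrix.trace_smul]
    exact Submodule.smul_mem _ _ (hM N hN)


namespace TraceDualAux


theorem fdiv_eq_of {x e d : ℤ} (he : 0 < e) (h1 : d * e ≤ x) (h2 : x < (d + 1) * e) :
    x.fdiv e = d := by
  rw [Int.fdiv_eq_ediv_of_nonneg _ he.le]
  have h3 : d ≤ x / e := (Int.le_ediv_iff_mul_le he).mpr h1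
  have h4 : x / e < d + 1 := (Int.ediv_lt_iff_lt_mul he).mpr h2
  omega

theorem fdiv_add_le {x y e : ℤ} (he : 0 < e) : x.fdiv e + y.fdiv e ≤ (x + y).fdiv e := by
  rw [Int.fdiv_eq_ediv_of_nonneg _ he.le, Int.fdiv_eq_ediv_of_nonneg _ he.le, Int.fdiv_eq_ediv_of_nonneg _ he.le,
    Int.le_ediv_iff_mul_le he, add_mul]
  have hx : x / e * e ≤ x := (Int.le_ediv_iff_mul_le he).mp le_rfl
  have hy : y / e * e ≤ y := (Int.le_ediv_iff_mul_le he).mp le_rfl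
  omega

variable {R K : Type*} [CommRing R] [Field K] [Algebra R K]

theorem mem_span_zpow {T x : K} {m : ℤ} :
    x ∈ Submodule.span R {T ^ m} ↔ ∃ r : R, algebraMap R K r * T ^ m = x := by
  simp [Submodule.mem_span_singleton, Algebra.smul_def]

theorem span_pow_mul {t : R} (hT : algebraMap R K t ≠ 0) {x y : K} {m n p : ℤ}
    (hx : x ∈ Submodule.span R {(algebraMap R K t) ^ m})
    (hy : y ∈ Submodule.span R {(algebraMap R K t) ^ n})
    (h : p ≤ m + n) :
    x * y ∈ Submodule.span R {(algebraMap R K t) ^ p} := by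
  set T := algebraMap R K t with hTdef
  obtain ⟨r, hr⟩ := mem_span_zpow.mp hx
  obtain ⟨s, hs⟩ := mem_span_zpow.mp hy
  refine mem_span_zpow.mpr ⟨r * s * t ^ (m + n - p).toNat, ?_⟩
  have h2 : T ^ ((m + n - p).toNat) * T ^ p = T ^ m * T ^ n := by
    rw [← zpow_natCast T, ← zpow_add₀ hT, ← zpow_add₀ hT]
    congr 1
    omega
  rw [← hr, ← hs, map_mul, map_mul, map_pow, ← hTdef]
  calc algebraMap R K r * algebraMap R K s * T ^ (m + n - p).toNat * T ^ p
      = algebraMap R K r * algebraMap R K s * (T ^ (m + n - p).toNat * T ^ p) := by ring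
    _ = algebraMap R K r * algebraMap R K s * (T ^ m * T ^ n) := by rw [h2]
    _ = algebraMap R K r * T ^ m * (algebraMap R K s * T ^ n) := by ring

variable (R K)

/-- The fractional ideal `𝔭^a` of the hereditary order, entrywise. -/
def Pmod (t : R) (e : ℕ) (a : ℤ) : Submodule R (Matrix (Fin e) (Fin e) K) where
  carrier := {M | ∀ j k : Fin e, M j k ∈ Submodule.span R
    {(algebraMap R K t) ^ (-(((k : ℤ) - (j : ℤ) + a).fdiv (e : ℤ)))}}
  add_mem' := by
    intro A B hA hB j k
    rw [Matrix.add_apply]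
    exact add_mem (hA j k) (hB j k)
  zero_mem' := by intro j k; simp
  smul_mem' := by
    intro r M hM j k
    rw [Matrix.smul_apply]
    exact Submodule.smul_mem _ _ (hM j k)

variable {R K}

theorem mem_Pmod_iff {t : R} {e : ℕ} {a : ℤ} {M : Matrix (Fin e) (Fin e) K} :
    M ∈ Pmod R K t e a ↔ ∀ j k : Fin e, M j k ∈ Submodule.span R
      {(algebraMap R K t) ^ (-(((k : ℤ) - (j : ℤ) + a).fdiv (e : ℤ)))} := Iff.rfl

theorem mul_mem_Pmod {t : R} {e : ℕ} (he : 1 ≤ e) (hT : algebraMap R K t ≠ 0) {a b : ℤ}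
    {A B : Matrix (Fin e) (Fin e) K} (hA : A ∈ Pmod R K t e a) (hB : B ∈ Pmod R K t e b) :
    A * B ∈ Pmod R K t e (a + b) := by
  have he' : (0 : ℤ) < (e : ℤ) := by exact_mod_cast he
  intro j k
  rw [Matrix.mul_apply]
  refine Submodule.sum_mem _ fun l _ => ?_
  refine span_pow_mul hT (hA j l) (hB l k) ?_
  have h1 := fdiv_add_le (x := (l : ℤ) - (j : ℤ) + a) (y := (k : ℤ) - (l : ℤ) + b) he'
  have h2 : ((l : ℤ) - (j : ℤ) + a) + ((k : ℤ) - (l : ℤ) + b) = (k : ℤ) - (j : ℤ) + (a + b) := by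
    ring
  rw [h2] at h1
  omega

theorem one_mem_Pmod {t : R} {e : ℕ} (he : 1 ≤ e) :
    (1 : Matrix (Fin e) (Fin e) K) ∈ Pmod R K t e 0 := by
  have he' : (0 : ℤ) < (e : ℤ) := by exact_mod_cast he
  intro j k
  by_cases h : j = k
  · subst h
    rw [Matrix.one_apply_eq]
    have hx : ((j : ℤ) - (j : ℤ) + 0).fdiv (e : ℤ) = 0 := fdiv_eq_of he' (by omega) (by omega)
    rw [hx]
    exact mem_span_zpow.mpr ⟨1, by simp⟩
  · rw [Matrix.one_apply_ne h]
    exact zero_mem _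


variable (R K)

/-- Inverse of `yMat`. -/
def yInv (t : R) (e : ℕ) : Matrix (Fin e) (Fin e) K :=
  Matrix.of fun i j =>
    if (i : ℕ) = (j : ℕ) + 1 then 1
    else if (j : ℕ) = e - 1 ∧ (i : ℕ) = 0 then (algebraMap R K t)⁻¹
    else 0

variable {R K}

theorem yMat_mul_yInv {t : R} {e : ℕ} (he : 1 ≤ e) (hT : algebraMap R K t ≠ 0) :
    yMat R K t e * yInv R K t e = 1 := by
  ext i k
  rw [Matrix.mul_apply, Matrix.one_apply]
  have hl0 : ∃ l0 : Fin e, (if (i : ℕ) + 1 < e then ((l0 : ℕ) = (i : ℕ) + 1) else ((l0 : ℕ) = 0)) := by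
    by_cases h : (i : ℕ) + 1 < e
    · exact ⟨⟨(i : ℕ) + 1, h⟩, by simp [h]⟩
    · exact ⟨⟨0, by omega⟩, by simp [h]⟩
  obtain ⟨l0, hl0⟩ := hl0
  rw [Finset.sum_eq_single l0]
  · by_cases h : (i : ℕ) + 1 < e
    · rw [if_pos h] at hl0
      have h1 : yMat R K t e i l0 = 1 := by
        unfold yMat; rw [Matrix.of_apply, if_pos hl0]
      rw [h1, one_mul]
      unfold yInv
      rw [Matrix.of_apply]
      by_cases hik : i = k
      · rw [if_pos (by omega : (l0 : ℕ) = (k : ℕ) + 1), if_pos hik]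
      · have hvk : ¬ (l0 : ℕ) = (k : ℕ) + 1 := by
          intro hc
          exact hik (Fin.ext (by omega))
        have hvk2 : ¬ ((k : ℕ) = e - 1 ∧ (l0 : ℕ) = 0) := by
          rintro ⟨h2, h3⟩; omega
        rw [if_neg hvk, if_neg hvk2, if_neg hik]
    · rw [if_neg h] at hl0
      have hie : (i : ℕ) = e - 1 := by have := i.isLt; omega
      have h1 : yMat R K t e i l0 = algebraMap R K t := by
        unfold yMat
        rw [Matrix.of_apply, if_neg (by omega : ¬ (l0 : ℕ) = (i : ℕ) + 1),
          if_pos ⟨hie, hl0⟩]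
      rw [h1]
      unfold yInv
      rw [Matrix.of_apply, if_neg (by omega : ¬ (l0 : ℕ) = (k : ℕ) + 1)]
      by_cases hk : (k : ℕ) = e - 1
      · rw [if_pos ⟨hk, hl0⟩, if_pos (Fin.ext (by omega) : i = k)]
        exact mul_inv_cancel₀ hT
      · have hik : ¬ i = k := fun hc => hk (by rw [← hc]; omega)
        rw [if_neg (by tauto), if_neg hik]
        exact mul_zero _
  · intro l _ hl
    have h1 : yMat R K t e i l = 0 := by
      unfold yMat
      rw [Matrix.of_apply]
      by_cases h : (i : ℕ) + 1 < e
      · rw [if_pos h] at hl0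
        have ha : ¬ (l : ℕ) = (i : ℕ) + 1 := fun hc => hl (Fin.ext (by omega))
        have hb : ¬ ((i : ℕ) = e - 1 ∧ (l : ℕ) = 0) := by
          rintro ⟨h2, h3⟩
          have := i.isLt
          omega
        rw [if_neg ha, if_neg hb]
      · rw [if_neg h] at hl0
        have ha : ¬ (l : ℕ) = (i : ℕ) + 1 := by have := l.isLt; omega
        have hb : ¬ ((i : ℕ) = e - 1 ∧ (l : ℕ) = 0) := by
          rintro ⟨h2, h3⟩
          exact hl (Fin.ext (by omega))
        rw [if_neg ha, if_neg hb]
    rw [h1, zero_mul]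
  · intro h
    exact absurd (Finset.mem_univ l0) h

theorem yInv_mul_yMat {t : R} {e : ℕ} (he : 1 ≤ e) (hT : algebraMap R K t ≠ 0) :
    yInv R K t e * yMat R K t e = 1 :=
  mul_eq_one_comm.mp (yMat_mul_yInv he hT)


theorem yMat_mem {t : R} {e : ℕ} (he : 1 ≤ e) :
    yMat R K t e ∈ Pmod R K t e (-1) := by
  have he' : (0 : ℤ) < (e : ℤ) := by exact_mod_cast he
  intro i j
  unfold yMat
  rw [Matrix.of_apply]
  split_ifs with h1 h2
  · have hx : ((j : ℤ) - (i : ℤ) + (-1)).fdiv (e : ℤ) = 0 := by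
      refine fdiv_eq_of he' (by omega) (by omega)
    rw [hx]
    exact mem_span_zpow.mpr ⟨1, by simp⟩
  · obtain ⟨h2a, h2b⟩ := h2
    have hil := i.isLt
    have hx : ((j : ℤ) - (i : ℤ) + (-1)).fdiv (e : ℤ) = -1 := by
      refine fdiv_eq_of he' (by omega) (by omega)
    rw [hx]
    exact mem_span_zpow.mpr ⟨1, by simp⟩
  · exact zero_mem _

theorem yInv_mem {t : R} {e : ℕ} (he : 1 ≤ e) (hT : algebraMap R K t ≠ 0) :
    yInv R K t e ∈ Pmod R K t e 1 := by
  have he' : (0 : ℤ) < (e : ℤ) := by exact_mod_cast he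
  intro i j
  unfold yInv
  rw [Matrix.of_apply]
  split_ifs with h1 h2
  · have hx : ((j : ℤ) - (i : ℤ) + 1).fdiv (e : ℤ) = 0 := by
      have := j.isLt
      refine fdiv_eq_of he' (by omega) (by omega)
    rw [hx]
    exact mem_span_zpow.mpr ⟨1, by simp⟩
  · obtain ⟨h2a, h2b⟩ := h2
    have hx : ((j : ℤ) - (i : ℤ) + 1).fdiv (e : ℤ) = 1 := by
      refine fdiv_eq_of he' (by omega) (by omega)
    rw [hx]
    refine mem_span_zpow.mpr ⟨1, ?_⟩
    rw [map_one, one_mul, zpow_neg, zpow_one]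
  · exact zero_mem _

theorem yMat_pow_mem {t : R} {e : ℕ} (he : 1 ≤ e) (hT : algebraMap R K t ≠ 0) (n : ℕ) :
    yMat R K t e ^ n ∈ Pmod R K t e (-(n : ℤ)) := by
  induction n with
  | zero => simpa using one_mem_Pmod he
  | succ n ih =>
      have h := mul_mem_Pmod he hT ih (yMat_mem he)
      rw [← pow_succ] at h
      convert h using 2
      push_cast
      ring

theorem yInv_pow_mem {t : R} {e : ℕ} (he : 1 ≤ e) (hT : algebraMap R K t ≠ 0) (n : ℕ) :
    yInv R K t e ^ n ∈ Pmod R K t e (n : ℤ) := by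
  induction n with
  | zero => simpa using one_mem_Pmod he
  | succ n ih =>
      have h := mul_mem_Pmod he hT ih (yInv_mem he hT)
      rw [← pow_succ] at h
      have hc : ((n : ℤ) + 1) = ((n + 1 : ℕ) : ℤ) := by push_cast; ring
      rw [hc] at h
      exact h

theorem yInv_pow_mul_yMat_pow {t : R} {e : ℕ} (he : 1 ≤ e) (hT : algebraMap R K t ≠ 0) (n : ℕ) :
    yInv R K t e ^ n * yMat R K t e ^ n = 1 := by
  induction n with
  | zero => simp
  | succ n ih =>
      rw [pow_succ, pow_succ' (yMat R K t e), mul_assoc, ← mul_assoc (yInv R K t e),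
        yInv_mul_yMat he hT, one_mul, ih]

theorem yMat_pow_mul_yInv_pow {t : R} {e : ℕ} (he : 1 ≤ e) (hT : algebraMap R K t ≠ 0) (n : ℕ) :
    yMat R K t e ^ n * yInv R K t e ^ n = 1 := by
  induction n with
  | zero => simp
  | succ n ih =>
      rw [pow_succ, pow_succ' (yInv R K t e), mul_assoc, ← mul_assoc (yMat R K t e),
        yMat_mul_yInv he hT, one_mul, ih]

theorem std_eq_P0 {t : R} {e : ℕ} (he : 1 ≤ e) :
    stdHereditaryOrder R K t e = ↑(Pmod R K t e 0) := by
  have he' : (0 : ℤ) < (e : ℤ) := by exact_mod_cast he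
  ext M
  constructor
  · intro hM i j
    have h := hM i j
    by_cases hlt : (j : ℕ) < (i : ℕ)
    · rw [if_pos hlt] at h
      obtain ⟨r, hr⟩ := h
      have hx : ((j : ℤ) - (i : ℤ) + 0).fdiv (e : ℤ) = -1 := by
        have := i.isLt
        refine fdiv_eq_of he' (by omega) (by omega)
      rw [hx]
      refine mem_span_zpow.mpr ⟨r, ?_⟩
      rw [← hr, map_mul]
      push_cast
      rw [zpow_one]
      ring
    · rw [if_neg hlt] at h
      obtain ⟨r, hr⟩ := h
      have hx : ((j : ℤ) - (i : ℤ) + 0).fdiv (e : ℤ) = 0 := by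
        have := j.isLt
        refine fdiv_eq_of he' (by omega) (by omega)
      rw [hx]
      exact mem_span_zpow.mpr ⟨r, by simpa using hr⟩
  · intro hM i j
    have h := hM i j
    by_cases hlt : (j : ℕ) < (i : ℕ)
    · rw [if_pos hlt]
      have hx : ((j : ℤ) - (i : ℤ) + 0).fdiv (e : ℤ) = -1 := by
        have := i.isLt
        refine fdiv_eq_of he' (by omega) (by omega)
      rw [hx] at h
      obtain ⟨r, hr⟩ := mem_span_zpow.mp h
      refine ⟨r, ?_⟩
      rw [← hr, map_mul]
      push_cast
      rw [zpow_one]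
      ring
    · rw [if_neg hlt]
      have hx : ((j : ℤ) - (i : ℤ) + 0).fdiv (e : ℤ) = 0 := by
        have := j.isLt
        refine fdiv_eq_of he' (by omega) (by omega)
      rw [hx] at h
      obtain ⟨r, hr⟩ := mem_span_zpow.mp h
      exact ⟨r, by simpa using hr⟩

theorem traceDual_eq {t : R} {e : ℕ} (he : 1 ≤ e) (hT : algebraMap R K t ≠ 0) :
    traceDualSubmodule R K t e = Pmod R K t e ((e : ℤ) - 1) := by
  have he' : (0 : ℤ) < (e : ℤ) := by exact_mod_cast he
  ext M
  constructor
  · intro hM j k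
    set v : K := if (j : ℕ) < (k : ℕ) then algebraMap R K t else 1 with hv
    have hN : Matrix.single k j v ∈ stdHereditaryOrder R K t e := by
      intro a b
      by_cases hc : k = a ∧ j = b
      · obtain ⟨rfl, rfl⟩ := hc
        rw [Matrix.single_apply_same]
        by_cases hlt : (j : ℕ) < (k : ℕ)
        · rw [if_pos hlt, hv, if_pos hlt]
          exact ⟨1, by rw [mul_one]⟩
        · rw [if_neg hlt, hv, if_neg hlt]
          exact ⟨1, by rw [map_one]⟩
      · rw [Matrix.single_apply_of_ne k j v a b hc]
        by_cases hlt : (b : ℕ) < (a : ℕ)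
        · rw [if_pos hlt]
          exact ⟨0, by rw [mul_zero, map_zero]⟩
        · rw [if_neg hlt]
          exact ⟨0, by rw [map_zero]⟩
    have htr := hM _ hN
    have htr2 : Matrix.trace (M * Matrix.single k j v) = M j k * v := by
      rw [Matrix.trace]
      rw [Finset.sum_eq_single j]
      · exact Matrix.mul_single_apply_same (c := v) k j j M
      · intro a _ ha
        exact Matrix.mul_single_apply_of_ne (c := v) k j a a ha M
      · intro h
        exact absurd (Finset.mem_univ j) h
    rw [htr2] at htr
    obtain ⟨r, hr⟩ := Submodule.mem_one.mp htr
    by_cases hlt : (j : ℕ) < (k : ℕ)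
    · rw [hv, if_pos hlt] at hr
      have hx : ((k : ℤ) - (j : ℤ) + ((e : ℤ) - 1)).fdiv (e : ℤ) = 1 := by
        have := k.isLt
        refine fdiv_eq_of he' (by omega) (by omega)
      rw [hx]
      refine mem_span_zpow.mpr ⟨r, ?_⟩
      rw [zpow_neg, zpow_one, hr]
      field_simp
    · rw [hv, if_neg hlt, mul_one] at hr
      have hx : ((k : ℤ) - (j : ℤ) + ((e : ℤ) - 1)).fdiv (e : ℤ) = 0 := by
        have := k.isLt
        have := j.isLt
        refine fdiv_eq_of he' (by omega) (by omega)
      rw [hx]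
      exact mem_span_zpow.mpr ⟨r, by simpa using hr⟩
  · intro hM N hN
    rw [Matrix.trace]
    refine Submodule.sum_mem _ fun a _ => ?_
    rw [Matrix.diag_apply, Matrix.mul_apply]
    refine Submodule.sum_mem _ fun l _ => ?_
    have hMa := hM a l
    have hNl := hN l a
    by_cases hlt : (a : ℕ) < (l : ℕ)
    · rw [if_pos hlt] at hNl
      obtain ⟨r2, hr2⟩ := hNl
      have hx : ((l : ℤ) - (a : ℤ) + ((e : ℤ) - 1)).fdiv (e : ℤ) = 1 := by
        have := l.isLt
        refine fdiv_eq_of he' (by omega) (by omega)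
      rw [hx] at hMa
      obtain ⟨r1, hr1⟩ := mem_span_zpow.mp hMa
      refine Submodule.mem_one.mpr ⟨r1 * r2, ?_⟩
      rw [← hr1, ← hr2, map_mul, map_mul, zpow_neg, zpow_one]
      field_simp
    · rw [if_neg hlt] at hNl
      obtain ⟨r2, hr2⟩ := hNl
      have hx : ((l : ℤ) - (a : ℤ) + ((e : ℤ) - 1)).fdiv (e : ℤ) = 0 := by
        have := l.isLt
        have := a.isLt
        refine fdiv_eq_of he' (by omega) (by omega)
      rw [hx] at hMa
      obtain ⟨r1, hr1⟩ := mem_span_zpow.mp hMa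
      refine Submodule.mem_one.mpr ⟨r1 * r2, ?_⟩
      rw [← hr1, ← hr2, map_mul]
      simp


end TraceDualAux


/-- For every `i ≥ 1`, the `i`-th power of the trace dual `ω` (as `R`-submodules
of the matrix algebra) equals `y^(-i(e-1)) · Δ`, and equals the set of matrices
whose `(j,k)` entry lies in the `R`-span of `t ^ (-⌊(k - j + i(e-1))/e⌋)`. -/
theorem traceDual_pow_eq (R K : Type*) [CommRing R] [IsDomain R]
    [IsDiscreteValuationRing R] [Field K] [Algebra R K] [IsFractionRing R K]
    (t : R) (ht : Ideal.span {t} = IsLocalRing.maximalIdeal R)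
    (e : ℕ) (he : 1 ≤ e) :
    ∀ i : ℕ, 1 ≤ i →
      (∀ u : (Matrix (Fin e) (Fin e) K)ˣ,
        (u : Matrix (Fin e) (Fin e) K) = yMat R K t e →
        ((traceDualSubmodule R K t e ^ i : Submodule R (Matrix (Fin e) (Fin e) K)) :
            Set (Matrix (Fin e) (Fin e) K))
          = (fun M => ((u ^ (-(i : ℤ) * ((e : ℤ) - 1)) : (Matrix (Fin e) (Fin e) K)ˣ) :
              Matrix (Fin e) (Fin e) K) * M) '' stdHereditaryOrder R K t e) ∧
      ((traceDualSubmodule R K t e ^ i : Submodule R (Matrix (Fin e) (Fin e) K)) :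
          Set (Matrix (Fin e) (Fin e) K))
        = {M : Matrix (Fin e) (Fin e) K | ∀ j k : Fin e,
            M j k ∈ Submodule.span R
              {(algebraMap R K t) ^
                (-(Int.fdiv ((k : ℤ) - (j : ℤ) + (i : ℤ) * ((e : ℤ) - 1)) (e : ℤ)))}} := by
  classical
  intro i hi
  have ht0 : t ≠ 0 := by
    intro h0
    refine IsDiscreteValuationRing.not_a_field R ?_
    rw [← ht, h0]
    exact Ideal.span_singleton_eq_bot.mpr rfl
  have hT : algebraMap R K t ≠ 0 := fun h0 =>
    ht0 (IsFractionRing.injective R K (by rw [h0, map_zero]))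
  set n : ℕ := i * (e - 1) with hn
  have hcast : ((n : ℕ) : ℤ) = (i : ℤ) * ((e : ℤ) - 1) := by
    rw [hn, Nat.cast_mul, Nat.cast_sub he, Nat.cast_one]
  have Pmul : ∀ (a : ℤ) (b : ℕ),
      TraceDualAux.Pmod R K t e a * TraceDualAux.Pmod R K t e (b : ℤ)
        = TraceDualAux.Pmod R K t e (a + b) := by
    intro a b
    apply le_antisymm
    · refine Submodule.mul_le.mpr fun A hA B hB => ?_
      exact TraceDualAux.mul_mem_Pmod he hT hA hB
    · intro M hM
      have h1 : M * yMat R K t e ^ b ∈ TraceDualAux.Pmod R K t e a := by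
        have h2 := TraceDualAux.mul_mem_Pmod he hT hM (TraceDualAux.yMat_pow_mem he hT b)
        have hc : a + (b : ℤ) + (-(b : ℤ)) = a := by ring
        rwa [hc] at h2
      have h2 := Submodule.mul_mem_mul h1 (TraceDualAux.yInv_pow_mem he hT b)
      rwa [mul_assoc, TraceDualAux.yMat_pow_mul_yInv_pow he hT b, mul_one] at h2
  have hc1 : ((e : ℤ) - 1) = ((e - 1 : ℕ) : ℤ) := by
    rw [Nat.cast_sub he, Nat.cast_one]
  have pow_eq : ∀ m : ℕ, 1 ≤ m → (traceDualSubmodule R K t e) ^ m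
      = TraceDualAux.Pmod R K t e ((m * (e - 1) : ℕ) : ℤ) := by
    intro m hm
    induction m with
    | zero => omega
    | succ m ihm =>
        by_cases hm0 : m = 0
        · subst hm0
          rw [pow_one, TraceDualAux.traceDual_eq he hT]
          congr 1
          rw [hc1]
          congr 1
          omega
        · have h1 : 1 ≤ m := by omega
          rw [pow_succ, ihm h1, TraceDualAux.traceDual_eq he hT, hc1, Pmul]
          congr 1
          rw [show (m + 1) * (e - 1) = m * (e - 1) + (e - 1) from by ring]
          push_cast
          ring
  constructor
  · intro u hu
    rw [pow_eq i hi]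
    have h1 : yMat R K t e * TraceDualAux.yInv R K t e = 1 := TraceDualAux.yMat_mul_yInv he hT
    have hinv : ((u⁻¹ : (Matrix (Fin e) (Fin e) K)ˣ) : Matrix (Fin e) (Fin e) K)
        = TraceDualAux.yInv R K t e := by
      calc ((u⁻¹ : (Matrix (Fin e) (Fin e) K)ˣ) : Matrix (Fin e) (Fin e) K)
          = ↑u⁻¹ * (yMat R K t e * TraceDualAux.yInv R K t e) := by rw [h1, mul_one]
        _ = (↑u⁻¹ * ↑u) * TraceDualAux.yInv R K t e := by rw [← hu, ← mul_assoc]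
        _ = TraceDualAux.yInv R K t e := by rw [Units.inv_mul, one_mul]
    have hzpow : ((u ^ (-(i : ℤ) * ((e : ℤ) - 1)) : (Matrix (Fin e) (Fin e) K)ˣ) :
        Matrix (Fin e) (Fin e) K) = TraceDualAux.yInv R K t e ^ n := by
      have hexp : (-(i : ℤ) * ((e : ℤ) - 1)) = -(n : ℤ) := by rw [hcast]; ring
      rw [hexp, zpow_neg, zpow_natCast, ← inv_pow, Units.val_pow_eq_pow_val, hinv]
    ext M
    simp only [Set.mem_image, SetLike.mem_coe]
    constructor
    · intro hM
      refine ⟨yMat R K t e ^ n * M, ?_, ?_⟩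
      · rw [TraceDualAux.std_eq_P0 he]
        have h2 := TraceDualAux.mul_mem_Pmod he hT (TraceDualAux.yMat_pow_mem he hT n) hM
        have hc : (-(n : ℤ) + (n : ℤ)) = 0 := by ring
        rwa [hc] at h2
      · rw [hzpow, ← mul_assoc, TraceDualAux.yInv_pow_mul_yMat_pow he hT n, one_mul]
    · rintro ⟨N, hN, rfl⟩
      rw [hzpow]
      have hN0 : N ∈ TraceDualAux.Pmod R K t e 0 := by
        rw [TraceDualAux.std_eq_P0 he] at hN
        exact hN
      have h2 := TraceDualAux.mul_mem_Pmod he hT (TraceDualAux.yInv_pow_mem he hT n) hN0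
      rwa [add_zero] at h2
  · rw [pow_eq i hi]
    rw [show ((i * (e - 1) : ℕ) : ℤ) = (i : ℤ) * ((e : ℤ) - 1) from hcast]
    rfl
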